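/- Let R be a ring, C its set of regular elements assumed to be a left Ore set with Q = C^{-1}R left Noetherian. Then the image C̃ = π(C) of C in R̄ = R/n (n the prime radical) is a left denominator set of R̄ with zero kernel, and C̃^{-1}R̄ ≅ Q/n_Q is a semiprime left Noetherian ring. -/
import Mathlib

/-- A (two-sided) prime ideal of a possibly noncommutative ring: a proper two-sided
ideal `P` such that `a R b ⊆ P` implies `a ∈ P` or `b ∈ P`. -/
def IsPrimeTwoSided {R : Type*} [Ring R] (P : Ideal R) : Prop :=
  (∀ a ∈ P, ∀ r : R, a * r ∈ P) ∧ P ≠ ⊤ ∧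
    ∀ a b : R, (∀ r : R, a * r * b ∈ P) → a ∈ P ∨ b ∈ P

/-- The prime radical (intersection of all two-sided prime ideals) of a ring. -/
def primeRadical (R : Type*) [Ring R] : Ideal R :=
  sInf {P : Ideal R | IsPrimeTwoSided P}

/-- An ideal `n` is nilpotent if, for some `k ≥ 1`, every product of `k` elements of
`n` vanishes. -/
def IdealIsNilpotent {R : Type*} [Ring R] (n : Ideal R) : Prop :=
  ∃ k : ℕ, 0 < k ∧ ∀ l : List R, (∀ x ∈ l, x ∈ n) → l.length = k → l.prod = 0

universe u

section Stmt10Aux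



section Aux

variable {S : Type*} [Ring S]

lemma primeRadical_mul_right {x : S} (hx : x ∈ primeRadical S) (s : S) :
    x * s ∈ primeRadical S := by
  rw [primeRadical, Submodule.mem_sInf] at hx ⊢
  intro P hP
  exact hP.1 _ (hx P hP) _

/-- Key stabilization lemma: in a left Noetherian ring, a left ideal that is stable
under right multiplication by a unit `u` is also stable under right multiplication
by `u⁻¹`. -/
lemma ideal_unit_stab {Q : Type*} [Ring Q] [IsNoetherianRing Q] (X : Ideal Q) (u : Qˣ)
    (hst : ∀ x ∈ X, x * (u : Q) ∈ X) {x : Q} (hx : x * (u : Q) ∈ X) : x ∈ X := by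
  let f : ℕ → Ideal Q := fun k =>
    { carrier := {y : Q | y * ((u ^ k : Qˣ) : Q) ∈ X}
      add_mem' := fun {a b} ha hb => by
        simp only [Set.mem_setOf_eq, add_mul] at *
        exact X.add_mem ha hb
      zero_mem' := by simp
      smul_mem' := fun c y hy => by
        simp only [Set.mem_setOf_eq, smul_eq_mul, mul_assoc] at *
        exact X.smul_mem c hy }
  have hmem : ∀ k (y : Q), y ∈ f k ↔ y * ((u ^ k : Qˣ) : Q) ∈ X := fun _ _ => Iff.rfl
  have hmono : Monotone f := by
    apply monotone_nat_of_le_succ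
    intro k y hy
    rw [hmem] at hy ⊢
    have : y * ((u ^ (k+1) : Qˣ) : Q) = (y * ((u ^ k : Qˣ) : Q)) * (u : Q) := by
      rw [pow_succ, Units.val_mul, mul_assoc]
    rw [this]
    exact hst _ hy
  obtain ⟨K, hK⟩ := monotone_stabilizes_iff_noetherian.mpr ‹IsNoetherianRing Q› ⟨f, hmono⟩
  have h1 : x * ((u⁻¹ ^ K : Qˣ) : Q) ∈ f (K + 1) := by
    rw [hmem]
    have : x * ((u⁻¹ ^ K : Qˣ) : Q) * ((u ^ (K+1) : Qˣ) : Q) = x * (u : Q) := by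
      rw [mul_assoc, ← Units.val_mul]
      congr 1
      rw [pow_succ, inv_pow, inv_mul_cancel_left]
    rw [this]
    exact hx
  have h2 : x * ((u⁻¹ ^ K : Qˣ) : Q) ∈ f K := by
    have heq : f K = f (K + 1) := hK (K+1) (Nat.le_succ K)
    rw [heq]
    exact h1
  rw [hmem] at h2
  have : x * ((u⁻¹ ^ K : Qˣ) : Q) * ((u ^ K : Qˣ) : Q) = x := by
    rw [mul_assoc, ← Units.val_mul, inv_pow, inv_mul_cancel, Units.val_one, mul_one]
  rwa [this] at h2

end Aux


section Zorn

variable {S : Type*} [Ring S]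

/-- A subset of a ring closed under the two-sided ideal operations. -/
def TsClosed (A : Set S) : Prop :=
  (0 : S) ∈ A ∧ (∀ x ∈ A, ∀ y ∈ A, x + y ∈ A) ∧
    (∀ x ∈ A, ∀ r : S, r * x ∈ A) ∧ (∀ x ∈ A, ∀ r : S, x * r ∈ A)

/-- The additive subgroup generated by all `r * a * s`. -/
def tms (a : S) : AddSubgroup S :=
  AddSubgroup.closure {x : S | ∃ r s : S, x = r * a * s}

lemma tms_mem_self (a : S) : a ∈ tms a :=
  AddSubgroup.subset_closure ⟨1, 1, by simp⟩

lemma tms_mul_left (a : S) {z : S} (hz : z ∈ tms a) (r : S) : r * z ∈ tms a := by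
  refine AddSubgroup.closure_induction (p := fun z _ => r * z ∈ tms a) ?_ ?_ ?_ ?_ hz
  · rintro x ⟨r', s', rfl⟩
    exact AddSubgroup.subset_closure ⟨r * r', s', by rw [← mul_assoc, ← mul_assoc]⟩
  · simpa using (tms a).zero_mem
  · intro x y _ _ hx hy
    simpa [mul_add] using (tms a).add_mem hx hy
  · intro x _ hx
    simpa [mul_neg] using (tms a).neg_mem hx

lemma tms_mul_right (a : S) {z : S} (hz : z ∈ tms a) (r : S) : z * r ∈ tms a := by
  refine AddSubgroup.closure_induction (p := fun z _ => z * r ∈ tms a) ?_ ?_ ?_ ?_ hz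
  · rintro x ⟨r', s', rfl⟩
    exact AddSubgroup.subset_closure ⟨r', s' * r, by rw [mul_assoc (r' * a)]⟩
  · simpa using (tms a).zero_mem
  · intro x y _ _ hx hy
    simpa [add_mul] using (tms a).add_mem hx hy
  · intro x _ hx
    simpa [neg_mul] using (tms a).neg_mem hx

lemma TsClosed.nmem {M : Set S} (hM : TsClosed M) {x : S} (hx : x ∈ M) : -x ∈ M := by
  simpa using hM.2.2.1 x hx (-1)

lemma tms_mul_tms_mem {M : Set S} (hM : TsClosed M) {a b : S}
    (hab : ∀ r : S, a * r * b ∈ M) {z₁ z₂ : S} (h₁ : z₁ ∈ tms a) (h₂ : z₂ ∈ tms b)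
    (w : S) : z₁ * w * z₂ ∈ M := by
  revert w
  refine AddSubgroup.closure_induction (p := fun z₁ _ => ∀ w, z₁ * w * z₂ ∈ M) ?_ ?_ ?_ ?_ h₁
  · rintro x ⟨r, s, rfl⟩ w
    refine AddSubgroup.closure_induction (p := fun z₂ _ => (r * a * s) * w * z₂ ∈ M) ?_ ?_ ?_ ?_ h₂
    · rintro y ⟨r', s', rfl⟩
      have key : a * (s * w * r') * b ∈ M := hab _
      have h1 : r * (a * (s * w * r') * b) ∈ M := hM.2.2.1 _ key r
      have h2 : (r * (a * (s * w * r') * b)) * s' ∈ M := hM.2.2.2 _ h1 s'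
      have heq : r * a * s * w * (r' * b * s') = r * (a * (s * w * r') * b) * s' := by
        noncomm_ring
      rwa [heq]
    · simpa using hM.1
    · intro x' y' _ _ hx' hy'
      simpa [mul_add] using hM.2.1 _ hx' _ hy'
    · intro x' _ hx'
      simpa [mul_neg] using hM.nmem hx'
  · intro w; simpa using hM.1
  · intro x y _ _ hx hy w
    have := hM.2.1 _ (hx w) _ (hy w)
    simpa [add_mul] using this
  · intro x _ hx w
    have := hM.nmem (hx w)
    simpa [neg_mul] using this

/-- Zorn-type construction: given an m-sequence of nonzero elements, there is a
two-sided prime ideal avoiding its head. -/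
lemma exists_prime_avoiding (f t : ℕ → S) (hstep : ∀ i, f (i + 1) = f i * t i * f i)
    (hnz : ∀ i, f i ≠ 0) : ∃ P : Ideal S, IsPrimeTwoSided P ∧ f 0 ∉ P := by
  classical
  set 𝒮 : Set (Set S) := {A | TsClosed A ∧ ∀ i, f i ∉ A} with h𝒮
  have h0 : ({0} : Set S) ∈ 𝒮 := by
    constructor
    · refine ⟨rfl, ?_, ?_, ?_⟩
      · intro x hx y hy
        simp only [Set.mem_singleton_iff] at *
        rw [hx, hy, add_zero]
      · intro x hx r
        simp only [Set.mem_singleton_iff] at *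
        rw [hx, mul_zero]
      · intro x hx r
        simp only [Set.mem_singleton_iff] at *
        rw [hx, zero_mul]
    · intro i h
      exact hnz i (by simpa using h)
  have hchainub : ∀ c ⊆ 𝒮, IsChain (· ⊆ ·) c → c.Nonempty →
      ∃ ub ∈ 𝒮, ∀ s ∈ c, s ⊆ ub := by
    intro c hc hchain hne
    refine ⟨⋃₀ c, ⟨⟨?_, ?_, ?_, ?_⟩, ?_⟩, fun s hs => Set.subset_sUnion_of_mem hs⟩
    · obtain ⟨A, hA⟩ := hne
      exact ⟨A, hA, (hc hA).1.1⟩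
    · rintro x ⟨A, hA, hxA⟩ y ⟨B, hB, hyB⟩
      rcases hchain.total hA hB with h | h
      · exact ⟨B, hB, (hc hB).1.2.1 x (h hxA) y hyB⟩
      · exact ⟨A, hA, (hc hA).1.2.1 x hxA y (h hyB)⟩
    · rintro x ⟨A, hA, hxA⟩ r
      exact ⟨A, hA, (hc hA).1.2.2.1 x hxA r⟩
    · rintro x ⟨A, hA, hxA⟩ r
      exact ⟨A, hA, (hc hA).1.2.2.2 x hxA r⟩
    · rintro i ⟨A, hA, hxA⟩
      exact (hc hA).2 i hxA
  obtain ⟨M, _, hMmax⟩ := zorn_subset_nonempty 𝒮 hchainub {0} h0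
  obtain ⟨hMts, hMavoid⟩ := hMmax.prop
  let P : Ideal S :=
    { carrier := M
      zero_mem' := hMts.1
      add_mem' := fun {x y} hx hy => hMts.2.1 x hx y hy
      smul_mem' := fun c x hx => by simpa [smul_eq_mul] using hMts.2.2.1 x hx c }
  refine ⟨P, ⟨fun a ha r => hMts.2.2.2 a ha r, ?_, ?_⟩, hMavoid 0⟩
  · intro htop
    have : f 0 ∈ P := htop ▸ Submodule.mem_top
    exact hMavoid 0 this
  · intro a b hab
    by_contra hcon
    push_neg at hcon
    obtain ⟨ha, hb⟩ := hcon
    have enlarge : ∀ c : S, c ∉ M → ∃ i, ∃ m ∈ M, ∃ z ∈ tms c, f i = m + z := by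
      intro c hc
      by_contra hno
      push_neg at hno
      set Mc : Set S := {x | ∃ m ∈ M, ∃ z ∈ tms c, x = m + z} with hMc
      have hMcS : Mc ∈ 𝒮 := by
        constructor
        · refine ⟨⟨0, hMts.1, 0, (tms c).zero_mem, by simp⟩, ?_, ?_, ?_⟩
          · rintro x ⟨m, hm, z, hz, rfl⟩ y ⟨m', hm', z', hz', rfl⟩
            exact ⟨m + m', hMts.2.1 _ hm _ hm', z + z', (tms c).add_mem hz hz',
              by rw [add_add_add_comm]⟩
          · rintro x ⟨m, hm, z, hz, rfl⟩ r
            exact ⟨r * m, hMts.2.2.1 _ hm r, r * z, tms_mul_left c hz r, by rw [mul_add]⟩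
          · rintro x ⟨m, hm, z, hz, rfl⟩ r
            exact ⟨m * r, hMts.2.2.2 _ hm r, z * r, tms_mul_right c hz r, by rw [add_mul]⟩
        · rintro i ⟨m, hm, z, hz, hfi⟩
          exact hno i m hm z hz hfi
      have hsub : M ⊆ Mc := fun m hm => ⟨m, hm, 0, (tms c).zero_mem, by simp⟩
      have : Mc ⊆ M := hMmax.2 hMcS hsub
      exact hc (this ⟨0, hMts.1, c, tms_mem_self c, by simp⟩)
    obtain ⟨i, hi⟩ := enlarge a ha
    obtain ⟨j, hj⟩ := enlarge b hb
    have hiter : ∀ (c : S) (k l : ℕ), k ≤ l →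
        (∃ m ∈ M, ∃ z ∈ tms c, f k = m + z) → ∃ m ∈ M, ∃ z ∈ tms c, f l = m + z := by
      intro c k l hkl h
      induction l, hkl using Nat.le_induction with
      | base => exact h
      | succ n hn ih =>
        obtain ⟨m, hm, z, hz, hfn⟩ := ih
        refine ⟨m * t n * m + m * (t n * z) + z * t n * m, ?_, z * t n * z, ?_, ?_⟩
        · refine hMts.2.1 _ (hMts.2.1 _ ?_ _ ?_) _ ?_
          · exact hMts.2.2.2 _ (hMts.2.2.2 _ hm (t n)) m
          · exact hMts.2.2.2 _ hm (t n * z)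
          · exact hMts.2.2.1 _ hm (z * t n)
        · exact tms_mul_right c (tms_mul_right c hz (t n)) z
        · rw [hstep n, hfn]
          noncomm_ring
    obtain ⟨m₁, hm₁, z₁, hz₁, hK₁⟩ := hiter a i (max i j) (le_max_left i j) hi
    obtain ⟨m₂, hm₂, z₂, hz₂, hK₂⟩ := hiter b j (max i j) (le_max_right i j) hj
    set K := max i j
    apply hMavoid (K + 1)
    have hexp : f (K + 1) = (m₁ * t K * m₂ + m₁ * (t K * z₂) + z₁ * t K * m₂)
        + z₁ * t K * z₂ := by
      rw [hstep K]
      nth_rewrite 1 [hK₁]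
      nth_rewrite 1 [hK₂]
      noncomm_ring
    rw [hexp]
    refine hMts.2.1 _ (hMts.2.1 _ (hMts.2.1 _ ?_ _ ?_) _ ?_) _ ?_
    · exact hMts.2.2.2 _ (hMts.2.2.2 _ hm₁ (t K)) m₂
    · exact hMts.2.2.2 _ hm₁ (t K * z₂)
    · exact hMts.2.2.1 _ hm₂ (z₁ * t K)
    · exact tms_mul_tms_mem hMts hab hz₁ hz₂ (t K)

end Zorn




section Transfer

variable {R : Type*} {Q : Type*} [Ring R] [Ring Q]

/-- Build an m-sequence avoiding a prime. -/
lemma exists_avoid_seq {S : Type*} [Ring S] {p : Ideal S} (hp : IsPrimeTwoSided p) {r : S}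
    (hr : r ∉ p) :
    ∃ f t : ℕ → S, f 0 = r ∧ (∀ i, f (i + 1) = f i * t i * f i) ∧ ∀ i, f i ∉ p := by
  classical
  have step : ∀ x : S, x ∉ p → ∃ u, x * u * x ∉ p := by
    intro x hx
    by_contra h
    push_neg at h
    rcases hp.2.2 x x h with h' | h' <;> exact hx h'
  let nxt : {x : S // x ∉ p} → {x : S // x ∉ p} := fun x =>
    ⟨x.1 * Classical.choose (step x.1 x.2) * x.1, Classical.choose_spec (step x.1 x.2)⟩
  let F : ℕ → {x : S // x ∉ p} := fun n => nxt^[n] ⟨r, hr⟩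
  refine ⟨fun n => (F n).1, fun n => Classical.choose (step (F n).1 (F n).2), rfl, ?_,
    fun n => (F n).2⟩
  intro i
  have h1 : F (i + 1) = nxt (F i) := Function.iterate_succ_apply' nxt i _
  exact congrArg Subtype.val h1

/-- The contraction of a two-sided prime of `Q` along `φ` is a two-sided prime of `R`. -/
lemma comapPrimeTwoSided [IsNoetherianRing Q] (φ : R →+* Q)
    (hunit : ∀ c : R, IsRegular c → IsUnit (φ c))
    (hfrac : ∀ q : Q, ∃ c r : R, IsRegular c ∧ φ c * q = φ r)
    {P : Ideal Q} (hP : IsPrimeTwoSided P) : IsPrimeTwoSided (P.comap φ) := by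
  refine ⟨?_, ?_, ?_⟩
  · intro a ha r
    rw [Ideal.mem_comap] at ha ⊢
    rw [map_mul]
    exact hP.1 _ ha _
  · intro h
    apply hP.2.1
    rw [Ideal.eq_top_iff_one] at h ⊢
    have := Ideal.mem_comap.mp h
    simpa using this
  · intro a b hab
    let X : Ideal Q :=
      { carrier := {x : Q | ∀ s : R, x * φ s * φ b ∈ P}
        add_mem' := fun {x y} hx hy s => by
          have := P.add_mem (hx s) (hy s)
          simpa [add_mul] using this
        zero_mem' := fun s => by simpa using P.zero_mem
        smul_mem' := fun c x hx s => by
          have := P.smul_mem c (hx s)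
          simpa [smul_eq_mul, mul_assoc] using this }
    have hXmem : ∀ x : Q, x ∈ X ↔ ∀ s : R, x * φ s * φ b ∈ P := fun _ => Iff.rfl
    have hXst : ∀ x ∈ X, ∀ s : R, x * φ s ∈ X := by
      intro x hx s s'
      have h2 := hx (s * s')
      rw [map_mul, ← mul_assoc] at h2
      exact h2
    have hXa : φ a ∈ X := by
      intro s
      have := hab s
      rw [Ideal.mem_comap, map_mul, map_mul] at this
      exact this
    have key : ∀ q : Q, φ a * q * φ b ∈ P := by
      intro q
      obtain ⟨c, r, hc, he⟩ := hfrac q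
      set v := (hunit c hc).unit with hv
      have hvc : (v : Q) = φ c := (hunit c hc).unit_spec
      have hmem : φ a * ((v⁻¹ : Qˣ) : Q) ∈ X := by
        apply ideal_unit_stab X v (fun x hx => by
          have := hXst x hx c
          rwa [← hvc] at this)
        have : φ a * ((v⁻¹ : Qˣ) : Q) * (v : Q) = φ a := by
          rw [mul_assoc, Units.inv_mul, mul_one]
        rw [this]
        exact hXa
      have hq : q = ((v⁻¹ : Qˣ) : Q) * φ r := by
        rw [← he, ← hvc, Units.inv_mul_cancel_left]
      have heq2 : φ a * q * φ b = φ a * ((v⁻¹ : Qˣ) : Q) * φ r * φ b := by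
        rw [hq, ← mul_assoc]
      rw [heq2]
      exact hmem r
    rcases hP.2.2 _ _ key with h | h
    · exact Or.inl (Ideal.mem_comap.mpr h)
    · exact Or.inr (Ideal.mem_comap.mpr h)

/-- Main transfer: the prime radical of `R` is the contraction of the prime radical
of `Q`. -/
lemma radical_iff [IsNoetherianRing Q] (φ : R →+* Q) (hinj : Function.Injective φ)
    (hunit : ∀ c : R, IsRegular c → IsUnit (φ c))
    (hfrac : ∀ q : Q, ∃ c r : R, IsRegular c ∧ φ c * q = φ r)
    (x : R) : φ x ∈ primeRadical Q ↔ x ∈ primeRadical R := by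
  constructor
  · intro h
    rw [primeRadical, Submodule.mem_sInf] at h ⊢
    intro p hp
    by_contra hx
    obtain ⟨f, t, hf0, hstep, havoid⟩ := exists_avoid_seq hp hx
    obtain ⟨P, hP, hP0⟩ := exists_prime_avoiding (fun i => φ (f i)) (fun i => φ (t i))
      (fun i => show φ (f (i + 1)) = φ (f i) * φ (t i) * φ (f i) by
        rw [hstep i, map_mul, map_mul])
      (fun i h0 => by
        have hz : f i = 0 := hinj (by simpa using h0)
        exact havoid i (hz ▸ p.zero_mem))
    apply hP0
    have := h P hP
    simpa [hf0] using this
  · intro h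
    rw [primeRadical, Submodule.mem_sInf] at h ⊢
    intro P hP
    have hcp := comapPrimeTwoSided φ hunit hfrac hP
    have hx : x ∈ Ideal.comap φ P := h _ hcp
    exact Ideal.mem_comap.mp hx

end Transfer

end Stmt10Aux

lemma unit_mul_inv_mul {M : Type*} [Monoid M] {a : M} (h : IsUnit a) (x : M) :
    a * (((h.unit⁻¹ : Mˣ) : M) * x) = x := by
  calc a * (((h.unit⁻¹ : Mˣ) : M) * x) = (h.unit : M) * (((h.unit⁻¹ : Mˣ) : M) * x) := by
        rw [h.unit_spec]
    _ = x := Units.mul_inv_cancel_left _ _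

lemma unit_inv_mul_mul {M : Type*} [Monoid M] {a : M} (h : IsUnit a) (x : M) :
    ((h.unit⁻¹ : Mˣ) : M) * (a * x) = x := by
  calc ((h.unit⁻¹ : Mˣ) : M) * (a * x) = ((h.unit⁻¹ : Mˣ) : M) * ((h.unit : M) * x) := by
        rw [h.unit_spec]
    _ = x := Units.inv_mul_cancel_left _ _

lemma unit_mul_mul_inv {M : Type*} [Monoid M] {a : M} (h : IsUnit a) (x : M) :
    x * a * ((h.unit⁻¹ : Mˣ) : M) = x := by
  calc x * a * ((h.unit⁻¹ : Mˣ) : M) = x * (h.unit : M) * ((h.unit⁻¹ : Mˣ) : M) := by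
        rw [h.unit_spec]
    _ = x := Units.mul_inv_cancel_right _ _


/-- Let `R` be a ring whose regular elements `C` form a left Ore set
with `Q = C⁻¹R` left Noetherian, and let `n` be the prime radical of `R`, with
`R̄ = R/n` modelled by a surjective ring homomorphism `ψ : R → R̄` with kernel `n`.
Then the image `C̃ = ψ(C)` of `C` in `R̄` is a left denominator set of `R̄` with zero
kernel, and `C̃⁻¹R̄ ≅ Q/n_Q` is a semiprime left Noetherian ring: any localization `Qt`
of `R̄` at `C̃` is left Noetherian, semiprime, and isomorphic to `Q/n_Q` (i.e. admits a
surjection from `Q` with kernel `n_Q`). -/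
theorem stmt10 {R Q Rbar : Type u} [Ring R] [Ring Q] [Ring Rbar]
    (hOre : ∀ (r c : R), IsRegular c → ∃ c' r' : R, IsRegular c' ∧ c' * r = r' * c)
    (φ : R →+* Q) (hinj : Function.Injective φ)
    (hunit : ∀ c : R, IsRegular c → IsUnit (φ c))
    (hfrac : ∀ q : Q, ∃ c r : R, IsRegular c ∧ φ c * q = φ r)
    [IsNoetherianRing Q]
    (ψ : R →+* Rbar) (hψsurj : Function.Surjective ψ)
    (hψker : ∀ r : R, ψ r = 0 ↔ r ∈ primeRadical R) :
    -- `C̃` is a left Ore set of `R̄` …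
    (∀ (rb : Rbar) (c : R), IsRegular c →
      ∃ c' r' : R, IsRegular c' ∧ ∃ rb' : Rbar, ψ c' * rb = rb' * ψ c) ∧
    -- … with zero left kernel (so it is a left denominator set with `ass = 0`) …
    (∀ c : R, IsRegular c → ∀ rb : Rbar, ψ c * rb = 0 → rb = 0) ∧
    (∀ c : R, IsRegular c → ∀ rb : Rbar, rb * ψ c = 0 → rb = 0) ∧
    -- … and `C̃⁻¹R̄` is a semiprime left Noetherian ring isomorphic to `Q/n_Q`.
    (∀ (Qt : Type u) [Ring Qt] (θ : Rbar →+* Qt), Function.Injective θ →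
      (∀ c : R, IsRegular c → IsUnit (θ (ψ c))) →
      (∀ q : Qt, ∃ c : R, IsRegular c ∧ ∃ rb : Rbar, θ (ψ c) * q = θ rb) →
      IsNoetherianRing Qt ∧
      (∀ a : Qt, (∀ x : Qt, a * x * a = 0) → a = 0) ∧
      ∃ χ : Q →+* Qt, Function.Surjective χ ∧
        ∀ q : Q, χ q = 0 ↔ q ∈ primeRadical Q) := by
  classical
  have kerIff : ∀ x : R, φ x ∈ primeRadical Q ↔ x ∈ primeRadical R :=
    radical_iff φ hinj hunit hfrac
  have hl : ∀ (c : R), IsRegular c → ∀ x : Q,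
      φ c * x ∈ primeRadical Q → x ∈ primeRadical Q := by
    intro c hc x hx
    have h4 := Submodule.smul_mem (primeRadical Q)
      ((((hunit c hc).unit)⁻¹ : Qˣ) : Q) hx
    rw [smul_eq_mul, unit_inv_mul_mul (hunit c hc)] at h4
    exact h4
  have hr : ∀ (c : R), IsRegular c → ∀ x : Q,
      x * φ c ∈ primeRadical Q → x ∈ primeRadical Q := by
    intro c hc x hx
    have h4 := primeRadical_mul_right hx ((((hunit c hc).unit)⁻¹ : Qˣ) : Q)
    rw [unit_mul_mul_inv (hunit c hc)] at h4
    exact h4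
  refine ⟨?_, ?_, ?_, ?_⟩
  · -- Ore condition
    intro rb c hc
    obtain ⟨r0, rfl⟩ := hψsurj rb
    obtain ⟨c', r', hc', h⟩ := hOre r0 c hc
    exact ⟨c', r', hc', ψ r', by rw [← map_mul, ← map_mul, h]⟩
  · -- left kernel zero
    intro c hc rb h0
    obtain ⟨r0, rfl⟩ := hψsurj rb
    rw [← map_mul] at h0
    have h1 : c * r0 ∈ primeRadical R := (hψker _).mp h0
    have h2 : φ c * φ r0 ∈ primeRadical Q := by
      rw [← map_mul]; exact (kerIff _).mpr h1
    exact (hψker _).mpr ((kerIff _).mp (hl c hc _ h2))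
  · -- right kernel zero
    intro c hc rb h0
    obtain ⟨r0, rfl⟩ := hψsurj rb
    rw [← map_mul] at h0
    have h1 : r0 * c ∈ primeRadical R := (hψker _).mp h0
    have h2 : φ r0 * φ c ∈ primeRadical Q := by
      rw [← map_mul]; exact (kerIff _).mpr h1
    exact (hψker _).mpr ((kerIff _).mp (hr c hc _ h2))
  · -- the localization Qt
    intro Qt _ θ hθinj hθu hθf
    let cc : Q → R := fun q => (hfrac q).choose
    let rr : Q → R := fun q => (hfrac q).choose_spec.choose
    have hprops : ∀ q : Q, IsRegular (cc q) ∧ φ (cc q) * q = φ (rr q) :=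
      fun q => (hfrac q).choose_spec.choose_spec
    let χf : Q → Qt := fun q => ((((hθu _ (hprops q).1).unit)⁻¹ : Qtˣ) : Qt) * θ (ψ (rr q))
    have hUcancel : ∀ (c : R), IsRegular c → ∀ {x y : Qt},
        θ (ψ c) * x = θ (ψ c) * y → x = y := by
      intro c hc x y hxy
      exact (IsUnit.mul_right_inj (hθu c hc)).mp hxy
    have hval : ∀ q : Q, θ (ψ (cc q)) * χf q = θ (ψ (rr q)) := by
      intro q
      show θ (ψ (cc q)) * (((((hθu _ (hprops q).1).unit)⁻¹ : Qtˣ) : Qt) * θ (ψ (rr q)))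
        = θ (ψ (rr q))
      exact unit_mul_inv_mul (hθu _ (hprops q).1) _
    have hspec : ∀ (q : Q) (c' r' : R), IsRegular c' → φ c' * q = φ r' →
        θ (ψ c') * χf q = θ (ψ r') := by
      intro q c' r' hc' he'
      obtain ⟨hcq, heq⟩ := hprops q
      obtain ⟨d, s, hd, hds⟩ := hOre c' (cc q) hcq
      have key : d * r' = s * rr q := by
        apply hinj
        rw [map_mul, map_mul]
        calc φ d * φ r' = φ d * (φ c' * q) := by rw [he']
          _ = φ d * φ c' * q := by rw [mul_assoc]
          _ = φ s * φ (cc q) * q := by rw [← map_mul, hds, map_mul]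
          _ = φ s * (φ (cc q) * q) := by rw [mul_assoc]
          _ = φ s * φ (rr q) := by rw [heq]
      apply hUcancel d hd
      calc θ (ψ d) * (θ (ψ c') * χf q)
          = θ (ψ d) * θ (ψ c') * χf q := by rw [mul_assoc]
        _ = θ (ψ s) * θ (ψ (cc q)) * χf q := by
            have hh : θ (ψ d) * θ (ψ c') = θ (ψ s) * θ (ψ (cc q)) := by
              simp only [← map_mul]
              rw [hds]
            rw [hh]
        _ = θ (ψ s) * (θ (ψ (cc q)) * χf q) := by rw [mul_assoc]
        _ = θ (ψ s) * θ (ψ (rr q)) := by rw [hval q]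
        _ = θ (ψ (s * rr q)) := by simp only [← map_mul]
        _ = θ (ψ (d * r')) := by rw [key]
        _ = θ (ψ d) * θ (ψ r') := by simp only [← map_mul]
    -- ring homomorphism facts
    have hone : χf 1 = 1 := by
      have h := hspec 1 1 1 isRegular_one (by rw [mul_one])
      apply hUcancel 1 isRegular_one
      rw [h, mul_one]
    have hzero : χf 0 = 0 := by
      have h := hspec 0 1 0 isRegular_one (by rw [mul_zero, map_zero])
      apply hUcancel 1 isRegular_one
      rw [h, map_zero, map_zero, mul_zero]
    have hadd : ∀ q₁ q₂ : Q, χf (q₁ + q₂) = χf q₁ + χf q₂ := by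
      intro q₁ q₂
      obtain ⟨hc₁, he₁⟩ := hprops q₁
      obtain ⟨hc₂, he₂⟩ := hprops q₂
      obtain ⟨e, s, heR, hes⟩ := hOre (cc q₁) (cc q₂) hc₂
      have hm : IsRegular (e * cc q₁) := heR.mul hc₁
      have h₁ : φ (e * cc q₁) * q₁ = φ (e * rr q₁) := by
        rw [map_mul, map_mul, mul_assoc, he₁]
      have h₂ : φ (e * cc q₁) * q₂ = φ (s * rr q₂) := by
        rw [hes, map_mul, map_mul, mul_assoc, he₂]
      have hsum : φ (e * cc q₁) * (q₁ + q₂) = φ (e * rr q₁ + s * rr q₂) := by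
        rw [mul_add, h₁, h₂, map_add]
      apply hUcancel _ hm
      rw [hspec _ _ _ hm hsum, mul_add, hspec _ _ _ hm h₁, hspec _ _ _ hm h₂, map_add,
        map_add]
    have hmul : ∀ q₁ q₂ : Q, χf (q₁ * q₂) = χf q₁ * χf q₂ := by
      intro q₁ q₂
      obtain ⟨hc₁, he₁⟩ := hprops q₁
      obtain ⟨hc₂, he₂⟩ := hprops q₂
      obtain ⟨d, s, hd, hds⟩ := hOre (rr q₁) (cc q₂) hc₂
      have hm : IsRegular (d * cc q₁) := hd.mul hc₁
      have hprod : φ (d * cc q₁) * (q₁ * q₂) = φ (s * rr q₂) := by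
        calc φ (d * cc q₁) * (q₁ * q₂) = φ d * (φ (cc q₁) * q₁) * q₂ := by
              rw [map_mul, mul_assoc, mul_assoc, ← mul_assoc (φ (cc q₁)) q₁ q₂,
                ← mul_assoc (φ d)]
          _ = φ d * φ (rr q₁) * q₂ := by rw [he₁]
          _ = φ (s * cc q₂) * q₂ := by rw [← map_mul, hds]
          _ = φ s * (φ (cc q₂) * q₂) := by rw [map_mul, mul_assoc]
          _ = φ s * φ (rr q₂) := by rw [he₂]
          _ = φ (s * rr q₂) := (map_mul φ s _).symm
      apply hUcancel _ hm
      rw [hspec _ _ _ hm hprod]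
      symm
      calc θ (ψ (d * cc q₁)) * (χf q₁ * χf q₂)
          = θ (ψ d) * (θ (ψ (cc q₁)) * χf q₁ * χf q₂) := by
            rw [map_mul, map_mul, mul_assoc, ← mul_assoc (θ (ψ (cc q₁)))]
        _ = θ (ψ d) * (θ (ψ (rr q₁)) * χf q₂) := by rw [hspec q₁ _ _ hc₁ he₁]
        _ = θ (ψ (d * rr q₁)) * χf q₂ := by rw [← mul_assoc]; simp only [← map_mul]
        _ = θ (ψ (s * cc q₂)) * χf q₂ := by rw [hds]
        _ = θ (ψ s) * (θ (ψ (cc q₂)) * χf q₂) := by simp only [map_mul]; rw [mul_assoc]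
        _ = θ (ψ s) * θ (ψ (rr q₂)) := by rw [hspec q₂ _ _ hc₂ he₂]
        _ = θ (ψ (s * rr q₂)) := by simp only [← map_mul]
    -- assemble the ring homomorphism
    let χ : Q →+* Qt :=
      { toFun := χf
        map_one' := hone
        map_mul' := hmul
        map_zero' := hzero
        map_add' := hadd }
    have hχ : ∀ q : Q, χ q = χf q := fun _ => rfl
    -- kernel
    have hker : ∀ q : Q, χf q = 0 ↔ q ∈ primeRadical Q := by
      intro q
      obtain ⟨hcq, heq⟩ := hprops q
      have hs := hspec q _ _ hcq heq
      constructor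
      · intro h0
        have h1 : θ (ψ (rr q)) = 0 := by rw [← hs, h0, mul_zero]
        have h2 : ψ (rr q) = 0 := hθinj (by rw [h1, map_zero])
        have h3 : rr q ∈ primeRadical R := (hψker _).mp h2
        have h4 : φ (rr q) ∈ primeRadical Q := (kerIff _).mpr h3
        rw [← heq] at h4
        exact hl _ hcq q h4
      · intro hq
        have h4 : φ (rr q) ∈ primeRadical Q := by
          rw [← heq]
          exact Submodule.smul_mem _ _ hq
        have h3 : rr q ∈ primeRadical R := (kerIff _).mp h4
        have h2 : ψ (rr q) = 0 := (hψker _).mpr h3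
        apply hUcancel _ hcq
        rw [hs, h2, map_zero, mul_zero]
    -- surjectivity
    have hsurj : Function.Surjective χf := by
      intro t0
      obtain ⟨c₀, hc₀, rb, hrb⟩ := hθf t0
      obtain ⟨r₀, hr₀⟩ := hψsurj rb
      refine ⟨((((hunit c₀ hc₀).unit)⁻¹ : Qˣ) : Q) * φ r₀, ?_⟩
      have hq : φ c₀ * (((((hunit c₀ hc₀).unit)⁻¹ : Qˣ) : Q) * φ r₀) = φ r₀ :=
        unit_mul_inv_mul (hunit c₀ hc₀) _
      apply hUcancel _ hc₀
      rw [hspec _ _ _ hc₀ hq, hr₀, ← hrb]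
    refine ⟨isNoetherianRing_of_surjective Q Qt χ hsurj, ?_, χ, hsurj, hker⟩
    -- semiprimeness
    intro a ha
    obtain ⟨q, rfl⟩ := hsurj a
    have hq : q ∈ primeRadical Q := by
      rw [primeRadical, Submodule.mem_sInf]
      intro P hP
      have hmid : ∀ p : Q, q * p * q ∈ P := by
        intro p
        have h0 : χf (q * p * q) = 0 := by
          rw [hmul, hmul, ha (χf p)]
        have h1 : q * p * q ∈ primeRadical Q := (hker _).mp h0
        rw [primeRadical, Submodule.mem_sInf] at h1
        exact h1 P hP
      rcases hP.2.2 q q hmid with h | h <;> exact h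
    exact (hker q).mpr hq
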